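/- In a model category, every pullback of a weak equivalence between fibrant objects along a fibration is a weak equivalence; consequently a model category in which every object is fibrant is right proper. -/
import Mathlib


open CategoryTheory CategoryTheory.Limits

universe v v' u u'

/-- A weak factorization system `(L, R)`. -/
structure WFS {M : Type u} [Category.{v} M] (L R : MorphismProperty M) : Prop where
  left_iff : ∀ {A B : M} (i : A ⟶ B),
    L i ↔ ∀ ⦃X Y : M⦄ (p : X ⟶ Y), R p → HasLiftingProperty i p
  right_iff : ∀ {X Y : M} (p : X ⟶ Y),
    R p ↔ ∀ ⦃A B : M⦄ (i : A ⟶ B), L i → HasLiftingProperty i p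
  factor : ∀ {X Y : M} (f : X ⟶ Y),
    ∃ (Z : M) (l : X ⟶ Z) (r : Z ⟶ Y), L l ∧ R r ∧ l ≫ r = f

/-- A model structure on a (complete and cocomplete) category `M`: classes of
cofibrations, fibrations and weak equivalences such that the weak equivalences are
closed under retracts and satisfy 2-out-of-3, and `(Cof ∩ W, Fib)` and
`(Cof, Fib ∩ W)` are functorial weak factorization systems. -/
structure ModelStructure (M : Type u) [Category.{v} M] where
  Cof : MorphismProperty M
  Fib : MorphismProperty M
  W : MorphismProperty M
  w_retract : ∀ {A B A' B' : M} (f : A ⟶ B) (g : A' ⟶ B')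
    (s : Arrow.mk f ⟶ Arrow.mk g) (r : Arrow.mk g ⟶ Arrow.mk f),
    s ≫ r = 𝟙 (Arrow.mk f) → W g → W f
  w_comp : ∀ {X Y Z : M} (f : X ⟶ Y) (g : Y ⟶ Z), W f → W g → W (f ≫ g)
  w_cancel_left : ∀ {X Y Z : M} (f : X ⟶ Y) (g : Y ⟶ Z), W f → W (f ≫ g) → W g
  w_cancel_right : ∀ {X Y Z : M} (f : X ⟶ Y) (g : Y ⟶ Z), W g → W (f ≫ g) → W f
  wfs_trivCof_fib : WFS (fun _ _ f => Cof f ∧ W f) Fib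
  wfs_cof_trivFib : WFS Cof (fun _ _ f => Fib f ∧ W f)
  functorial_fact₁ :
    MorphismProperty.HasFunctorialFactorization (fun _ _ f => Cof f ∧ W f) Fib
  functorial_fact₂ :
    MorphismProperty.HasFunctorialFactorization Cof (fun _ _ f => Fib f ∧ W f)

/-- An object is cofibrant if the morphism from the initial object is a cofibration. -/
def ModelStructure.Cofibrant {M : Type u} [Category.{v} M] [HasInitial M]
    (S : ModelStructure M) (X : M) : Prop :=
  S.Cof (initial.to X)

/-- An object is fibrant if the morphism to the terminal object is a fibration. -/
def ModelStructure.Fibrant {M : Type u} [Category.{v} M] [HasTerminal M]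
    (S : ModelStructure M) (X : M) : Prop :=
  S.Fib (terminal.from X)

section Helpers

variable {M : Type u} [Category.{v} M]

lemma ModelStructure.w_id (S : ModelStructure M) (X : M) : S.W (𝟙 X) := by
  obtain ⟨Z', l, r', hl, _, hlr⟩ := S.wfs_trivCof_fib.factor (𝟙 X)
  refine S.w_retract (𝟙 X) l (Arrow.homMk (u := 𝟙 X) (v := l) (by simp))
    (Arrow.homMk (u := 𝟙 X) (v := r') (by simp [hlr])) ?_ hl.2
  ext <;> simp [hlr]

lemma pullback_hlp {P' X Y Z : M} {fst : P' ⟶ X} {snd : P' ⟶ Y} {f : X ⟶ Z} {g : Y ⟶ Z}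
    (h : IsPullback fst snd f g) {A B : M} {i : A ⟶ B}
    (hf : HasLiftingProperty i f) : HasLiftingProperty i snd := by
  constructor
  intro a b sq
  have sq2 : CommSq (a ≫ fst) i f (b ≫ g) :=
    ⟨by rw [Category.assoc, h.w, ← Category.assoc, sq.w, Category.assoc]⟩
  exact CommSq.HasLift.mk'
    { l := h.lift sq2.lift b (by rw [sq2.fac_right])
      fac_left := by
        apply h.hom_ext
        · rw [Category.assoc, h.lift_fst, sq2.fac_left]
        · rw [Category.assoc, h.lift_snd, sq.w]
      fac_right := h.lift_snd _ _ _ }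

variable [HasTerminal M]

lemma ModelStructure.fib_comp (S : ModelStructure M) {X Y Z : M} {f : X ⟶ Y} {g : Y ⟶ Z}
    (hf : S.Fib f) (hg : S.Fib g) : S.Fib (f ≫ g) := by
  rw [S.wfs_trivCof_fib.right_iff]
  intro A B i hi
  haveI := (S.wfs_trivCof_fib.right_iff f).mp hf i hi
  haveI := (S.wfs_trivCof_fib.right_iff g).mp hg i hi
  infer_instance

lemma ModelStructure.fibrant_of_fib (S : ModelStructure M) {Y Z : M} {p : Y ⟶ Z}
    (hp : S.Fib p) (hZ : S.Fibrant Z) : S.Fibrant Y := by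
  have : terminal.from Y = p ≫ terminal.from Z := Subsingleton.elim _ _
  rw [ModelStructure.Fibrant, this]
  exact S.fib_comp hp hZ

variable [HasLimits M]

lemma ModelStructure.prod_snd_fib (S : ModelStructure M) {A B : M} (hA : S.Fibrant A) :
    S.Fib (prod.snd : A ⨯ B ⟶ B) := by
  rw [S.wfs_trivCof_fib.right_iff]
  intro A' B' i hi
  haveI : HasLiftingProperty i (terminal.from A) :=
    (S.wfs_trivCof_fib.left_iff i).mp hi _ hA
  constructor
  intro f g sq
  have sq' : CommSq (f ≫ prod.fst) i (terminal.from A) (terminal.from B') :=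
    ⟨Subsingleton.elim _ _⟩
  exact CommSq.HasLift.mk'
    { l := prod.lift sq'.lift g
      fac_left := by
        apply Limits.prod.hom_ext
        · rw [Category.assoc, prod.lift_fst, sq'.fac_left]
        · rw [Category.assoc, prod.lift_snd, sq.w]
      fac_right := by rw [prod.lift_snd] }

end Helpers

section Key

variable {M : Type u} [Category.{v} M] [HasLimits M] [HasTerminal M]

lemma ModelStructure.key (S : ModelStructure M)
    {P X Y Z : M} (w' : P ⟶ Y) (u : P ⟶ X) (w : X ⟶ Z) (p : Y ⟶ Z)
    (hpb : IsPullback u w' w p) (hw : S.W w) (hX : S.Fibrant X) (hZ : S.Fibrant Z)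
    (hp : S.Fib p) : S.W w' := by
  classical
  -- factor `w` as a trivial cofibration `i` followed by a fibration `q`
  obtain ⟨V, i, q, hi, hq, hiq⟩ := S.wfs_trivCof_fib.factor w
  have hWq : S.W q := S.w_cancel_left i q hi.2 (by rwa [hiq])
  have hVfib : S.Fibrant V := S.fibrant_of_fib hq hZ
  -- the pullback `E` of `q` along `p`
  let E := pullback q p
  let ρ : E ⟶ V := pullback.fst q p
  let κ : E ⟶ Y := pullback.snd q p
  have hE : IsPullback ρ κ q p := IsPullback.of_hasPullback q p
  have hκTF : S.Fib κ ∧ S.W κ := by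
    rw [S.wfs_cof_trivFib.right_iff]
    intro A B i' hi'
    exact pullback_hlp hE ((S.wfs_cof_trivFib.right_iff q).mp ⟨hq, hWq⟩ i' hi')
  have hρ : S.Fib ρ := by
    rw [S.wfs_trivCof_fib.right_iff]
    intro A B i' hi'
    exact pullback_hlp hE.flip ((S.wfs_trivCof_fib.right_iff p).mp hp i' hi')
  -- the induced map `k : P ⟶ E`
  have hkw : (u ≫ i) ≫ q = w' ≫ p := by rw [Category.assoc, hiq, hpb.w]
  let k : P ⟶ E := hE.lift (u ≫ i) w' hkw
  have hkρ : k ≫ ρ = u ≫ i := hE.lift_fst _ _ _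
  have hkκ : k ≫ κ = w' := hE.lift_snd _ _ _
  -- the left square is a pullback
  have hbig : IsPullback (k ≫ κ) u p (i ≫ q) := by rw [hkκ, hiq]; exact hpb.flip
  have hPleft : IsPullback k u ρ i := IsPullback.of_right hbig hkρ hE.flip
  -- retraction of `i`
  haveI : HasLiftingProperty i (terminal.from X) := (S.wfs_trivCof_fib.left_iff i).mp hi _ hX
  have sqr : CommSq (𝟙 X) i (terminal.from X) (terminal.from V) := ⟨Subsingleton.elim _ _⟩
  let r : V ⟶ X := sqr.lift
  have hir : i ≫ r = 𝟙 X := sqr.fac_left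
  have hWr : S.W r := S.w_cancel_left i r hi.2 (by rw [hir]; exact S.w_id X)
  -- path object on `V`
  obtain ⟨PV, c, π, hc, hπ, hcπ⟩ := S.wfs_trivCof_fib.factor (prod.lift (𝟙 V) (𝟙 V))
  let d0 : PV ⟶ V := π ≫ prod.fst
  let d1 : PV ⟶ V := π ≫ prod.snd
  have hcd0 : c ≫ d0 = 𝟙 V := by rw [← Category.assoc, hcπ, prod.lift_fst]
  have hcd1 : c ≫ d1 = 𝟙 V := by rw [← Category.assoc, hcπ, prod.lift_snd]
  have hd1fib : S.Fib d1 := S.fib_comp hπ (S.prod_snd_fib hVfib)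
  have hWd1 : S.W d1 := S.w_cancel_left c d1 hc.2 (by rw [hcd1]; exact S.w_id V)
  -- the homotopy `H` from `r ≫ i` to the identity, rel `X`
  haveI : HasLiftingProperty i π := (S.wfs_trivCof_fib.left_iff i).mp hi π hπ
  have sqH : CommSq (i ≫ c) i π (prod.lift (r ≫ i) (𝟙 V)) := by
    constructor
    rw [Category.assoc, hcπ, prod.comp_lift, prod.comp_lift, ← Category.assoc i r, hir]
    simp only [Category.comp_id, Category.id_comp]
  let H : V ⟶ PV := sqH.lift
  have hiH : i ≫ H = i ≫ c := sqH.fac_left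
  have hHπ : H ≫ π = prod.lift (r ≫ i) (𝟙 V) := sqH.fac_right
  have hHd0 : H ≫ d0 = r ≫ i := by
    rw [show H ≫ d0 = (H ≫ π) ≫ prod.fst by simp [d0], hHπ, prod.lift_fst]
  have hHd1 : H ≫ d1 = 𝟙 V := by
    rw [show H ≫ d1 = (H ≫ π) ≫ prod.snd by simp [d1], hHπ, prod.lift_snd]
  -- the relative path object `PA` of `E` over `V`
  let pm : E ⨯ E ⟶ V ⨯ V := prod.map ρ ρ
  let Q := pullback π pm
  let Qp : Q ⟶ PV := pullback.fst π pm
  let Qe : Q ⟶ E ⨯ E := pullback.snd π pm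
  have hQ : IsPullback Qp Qe π pm := IsPullback.of_hasPullback π pm
  have hθw : (ρ ≫ c) ≫ π = prod.lift (𝟙 E) (𝟙 E) ≫ pm := by
    rw [Category.assoc, hcπ, prod.comp_lift, prod.lift_map]
    simp
  let θ : E ⟶ Q := hQ.lift (ρ ≫ c) (prod.lift (𝟙 E) (𝟙 E)) hθw
  have hθ1 : θ ≫ Qp = ρ ≫ c := hQ.lift_fst _ _ _
  have hθ2 : θ ≫ Qe = prod.lift (𝟙 E) (𝟙 E) := hQ.lift_snd _ _ _
  obtain ⟨PA, cA, πA, hcA, hπA, hfacA⟩ := S.wfs_trivCof_fib.factor θ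
  let Pρ : PA ⟶ PV := πA ≫ Qp
  let e0 : PA ⟶ E := πA ≫ Qe ≫ prod.fst
  let e1 : PA ⟶ E := πA ≫ Qe ≫ prod.snd
  have hcAPρ : cA ≫ Pρ = ρ ≫ c := by
    rw [show cA ≫ Pρ = (cA ≫ πA) ≫ Qp by simp [Pρ], hfacA, hθ1]
  have hcAe0 : cA ≫ e0 = 𝟙 E := by
    rw [show cA ≫ e0 = ((cA ≫ πA) ≫ Qe) ≫ prod.fst by simp [e0], hfacA, hθ2, prod.lift_fst]
  have hcAe1 : cA ≫ e1 = 𝟙 E := by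
    rw [show cA ≫ e1 = ((cA ≫ πA) ≫ Qe) ≫ prod.snd by simp [e1], hfacA, hθ2, prod.lift_snd]
  have he0ρ : e0 ≫ ρ = Pρ ≫ d0 := by
    rw [show e0 ≫ ρ = πA ≫ Qe ≫ prod.fst ≫ ρ by simp [e0],
      show prod.fst ≫ ρ = pm ≫ prod.fst by rw [prod.map_fst],
      show Qe ≫ pm ≫ prod.fst = (Qe ≫ pm) ≫ prod.fst by rw [Category.assoc], ← hQ.w]
    simp [Pρ, d0]
  have he1ρ : e1 ≫ ρ = Pρ ≫ d1 := by
    rw [show e1 ≫ ρ = πA ≫ Qe ≫ prod.snd ≫ ρ by simp [e1],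
      show prod.snd ≫ ρ = pm ≫ prod.snd by rw [prod.map_snd],
      show Qe ≫ pm ≫ prod.snd = (Qe ≫ pm) ≫ prod.snd by rw [Category.assoc], ← hQ.w]
    simp [Pρ, d1]
  -- the object `N` and the trivial fibration `Φ : PA ⟶ N`
  let N := pullback d1 ρ
  let Np : N ⟶ PV := pullback.fst d1 ρ
  let Ne : N ⟶ E := pullback.snd d1 ρ
  have hN : IsPullback Np Ne d1 ρ := IsPullback.of_hasPullback d1 ρ
  have hNeTF : S.Fib Ne ∧ S.W Ne := by
    rw [S.wfs_cof_trivFib.right_iff]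
    intro A B i' hi'
    exact pullback_hlp hN ((S.wfs_cof_trivFib.right_iff d1).mp ⟨hd1fib, hWd1⟩ i' hi')
  let lamA : E ⟶ N := hN.lift (ρ ≫ c) (𝟙 E)
    (by rw [Category.assoc, hcd1, Category.comp_id, Category.id_comp])
  have hlamNe : lamA ≫ Ne = 𝟙 E := hN.lift_snd _ _ _
  have hlamNp : lamA ≫ Np = ρ ≫ c := hN.lift_fst _ _ _
  have hWlam : S.W lamA := S.w_cancel_right lamA Ne hNeTF.2 (by rw [hlamNe]; exact S.w_id E)
  let Φ : PA ⟶ N := hN.lift Pρ e1 he1ρ.symm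
  have hΦ1 : Φ ≫ Np = Pρ := hN.lift_fst _ _ _
  have hΦ2 : Φ ≫ Ne = e1 := hN.lift_snd _ _ _
  have hcAΦ : cA ≫ Φ = lamA := by
    apply hN.hom_ext
    · rw [Category.assoc, hΦ1, hcAPρ, hlamNp]
    · rw [Category.assoc, hΦ2, hcAe1, hlamNe]
  have hWΦ : S.W Φ := S.w_cancel_left cA Φ hcA.2 (by rw [hcAΦ]; exact hWlam)
  have hFibΦ : S.Fib Φ := by
    rw [S.wfs_trivCof_fib.right_iff]
    intro A' B' i' hi'
    haveI h1 : HasLiftingProperty i' ρ := (S.wfs_trivCof_fib.right_iff ρ).mp hρ i' hi'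
    haveI h2 : HasLiftingProperty i' πA := (S.wfs_trivCof_fib.right_iff πA).mp hπA i' hi'
    constructor
    intro su sv sq
    have sq1 : CommSq (su ≫ e0) i' ρ (sv ≫ Np ≫ d0) := by
      constructor
      rw [Category.assoc, he0ρ, ← Category.assoc, ← hΦ1,
        show (su ≫ Φ ≫ Np) ≫ d0 = (su ≫ Φ) ≫ Np ≫ d0 by simp only [Category.assoc],
        sq.w]
      simp only [Category.assoc]
    have hQl : (sv ≫ Np) ≫ π = prod.lift sq1.lift (sv ≫ Ne) ≫ pm := by
      apply Limits.prod.hom_ext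
      · rw [prod.lift_map, prod.lift_fst, sq1.fac_right]
        simp only [Category.assoc, d0]
      · rw [prod.lift_map, prod.lift_snd, Category.assoc, Category.assoc,
          show Np ≫ π ≫ prod.snd = Ne ≫ ρ from hN.w, Category.assoc]
    let lQ : B' ⟶ Q := hQ.lift (sv ≫ Np) (prod.lift sq1.lift (sv ≫ Ne)) hQl
    have sq2 : CommSq su i' πA lQ := by
      constructor
      apply hQ.hom_ext
      · rw [Category.assoc, Category.assoc, hQ.lift_fst,
          show su ≫ πA ≫ Qp = su ≫ Pρ by simp [Pρ], ← hΦ1, ← Category.assoc, ← Category.assoc,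
          sq.w, Category.assoc]
      · rw [Category.assoc, Category.assoc, hQ.lift_snd]
        apply Limits.prod.hom_ext
        · simp only [Category.assoc]
          rw [prod.lift_fst, sq1.fac_left]
        · simp only [Category.assoc]
          rw [prod.lift_snd, show πA ≫ Qe ≫ prod.snd = Φ ≫ Ne from by rw [hΦ2],
            ← Category.assoc, sq.w, Category.assoc]
    exact CommSq.HasLift.mk'
      { l := sq2.lift
        fac_left := sq2.fac_left
        fac_right := by
          apply hN.hom_ext
          · rw [Category.assoc, hΦ1,
              show sq2.lift ≫ Pρ = (sq2.lift ≫ πA) ≫ Qp by simp only [Pρ, Category.assoc],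
              sq2.fac_right, hQ.lift_fst]
          · rw [Category.assoc, hΦ2,
              show sq2.lift ≫ e1 = ((sq2.lift ≫ πA) ≫ Qe) ≫ prod.snd by
                simp only [e1, Category.assoc],
              sq2.fac_right, hQ.lift_snd, prod.lift_snd] }
  -- factor `k`
  obtain ⟨P₁, kc, kf, hkc, hkf, hkck⟩ := S.wfs_cof_trivFib.factor k
  -- the covering homotopy
  let m : E ⟶ N := hN.lift (ρ ≫ H) (𝟙 E)
    (by rw [Category.assoc, hHd1, Category.comp_id, Category.id_comp])
  have hm1 : m ≫ Np = ρ ≫ H := hN.lift_fst _ _ _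
  have hm2 : m ≫ Ne = 𝟙 E := hN.lift_snd _ _ _
  haveI : HasLiftingProperty kc Φ := (S.wfs_cof_trivFib.left_iff kc).mp hkc Φ ⟨hFibΦ, hWΦ⟩
  have sqM : CommSq (k ≫ cA) kc Φ (kf ≫ m) := by
    constructor
    apply hN.hom_ext
    · simp only [Category.assoc]
      rw [hΦ1, hcAPρ, hm1, ← Category.assoc kc kf, hkck, ← Category.assoc k ρ,
        ← Category.assoc k ρ, hkρ, Category.assoc, Category.assoc, hiH]
    · simp only [Category.assoc]
      rw [hΦ2, hcAe1, hm2, Category.comp_id, Category.comp_id, hkck]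
  let Ml : P₁ ⟶ PA := sqM.lift
  have hMl : kc ≫ Ml = k ≫ cA := sqM.fac_left
  have hMr : Ml ≫ Φ = kf ≫ m := sqM.fac_right
  have hMe1 : Ml ≫ e1 = kf := by
    rw [← hΦ2, ← Category.assoc, hMr, Category.assoc, hm2, Category.comp_id]
  have hMPρ : Ml ≫ Pρ = kf ≫ ρ ≫ H := by
    rw [← hΦ1, ← Category.assoc, hMr, Category.assoc, hm1]
  let b : P₁ ⟶ E := Ml ≫ e0
  have hkcb : kc ≫ b = k := by
    rw [show kc ≫ b = (kc ≫ Ml) ≫ e0 by simp only [b, Category.assoc], hMl,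
      Category.assoc, hcAe0, Category.comp_id]
  have hbρ : b ≫ ρ = (kf ≫ ρ ≫ r) ≫ i := by
    rw [show b ≫ ρ = Ml ≫ e0 ≫ ρ by simp only [b, Category.assoc], he0ρ, ← Category.assoc,
      hMPρ]
    rw [show (kf ≫ ρ ≫ H) ≫ d0 = kf ≫ ρ ≫ H ≫ d0 by simp only [Category.assoc], hHd0]
    simp only [Category.assoc]
  -- `b` is a weak equivalence
  have hWe1 : S.W e1 := S.w_cancel_left cA e1 hcA.2 (by rw [hcAe1]; exact S.w_id E)
  have hWe0 : S.W e0 := S.w_cancel_left cA e0 hcA.2 (by rw [hcAe0]; exact S.w_id E)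
  have hWM : S.W Ml := S.w_cancel_right Ml e1 hWe1 (by rw [hMe1]; exact hkf.2)
  have hWb : S.W b := S.w_comp Ml e0 hWM hWe0
  -- the retraction `t`
  let t : P₁ ⟶ P := hPleft.lift b (kf ≫ ρ ≫ r) hbρ
  have ht1 : t ≫ k = b := hPleft.lift_fst _ _ _
  have ht2 : t ≫ u = kf ≫ ρ ≫ r := hPleft.lift_snd _ _ _
  have hkct : kc ≫ t = 𝟙 P := by
    apply hPleft.hom_ext
    · rw [Category.assoc, ht1, hkcb, Category.id_comp]
    · rw [Category.assoc, ht2, Category.id_comp, ← Category.assoc, hkck, ← Category.assoc,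
        hkρ, Category.assoc, hir, Category.comp_id]
  have hWtkc : S.W (t ≫ kc) := by
    refine S.w_cancel_right (t ≫ kc) kf hkf.2 ?_
    rw [Category.assoc, hkck, ht1]
    exact hWb
  have hWkc : S.W kc := by
    refine S.w_retract kc (t ≫ kc)
      (Arrow.homMk (u := kc) (v := 𝟙 P₁) (by simp [reassoc_of% hkct]))
      (Arrow.homMk (u := t) (v := 𝟙 P₁) (by simp)) ?_ hWtkc
    ext <;> simp [hkct]
  have hWk : S.W k := by rw [← hkck]; exact S.w_comp kc kf hWkc hkf.2
  rw [← hkκ]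
  exact S.w_comp k κ hWk hκTF.2

end Key

/-- In a model category, every pullback of a weak equivalence between fibrant objects
along a fibration is a weak equivalence; consequently a model category in which every
object is fibrant is right proper. -/
theorem pullback_weq_along_fib {M : Type u} [Category.{v} M]
    [HasLimits M] [HasColimits M] [HasTerminal M]
    (S : ModelStructure M) :
    (∀ {P X Y Z : M} (w' : P ⟶ Y) (u : P ⟶ X) (w : X ⟶ Z) (p : Y ⟶ Z),
      IsPullback u w' w p → S.W w → S.Fibrant X → S.Fibrant Z → S.Fib p →
      S.W w') ∧
    ((∀ X : M, S.Fibrant X) →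
      ∀ {P X Y Z : M} (w' : P ⟶ Y) (u : P ⟶ X) (w : X ⟶ Z) (p : Y ⟶ Z),
        IsPullback u w' w p → S.W w → S.Fib p → S.W w') := by
  constructor
  · intro P X Y Z w' u w p hpb hw hX hZ hp
    exact S.key w' u w p hpb hw hX hZ hp
  · intro hall P X Y Z w' u w p hpb hw hp
    exact S.key w' u w p hpb hw (hall X) (hall Z) hp
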